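/- If U : (Fin N → ℝ³) → ℝ is invariant under the simultaneous action of SO(3) on each argument (U(Rq₁,...,Rq_N) = U(q₁,...,q_N) for all R ∈ SO(3)), and U is differentiable, then the sum over i of q_i × (∂U/∂q_i) equals zero. -/

import Mathlib

open Matrix Finset Real

lemma key_lemma (N : ℕ) (U : (Fin N → Fin 3 → ℝ) → ℝ)
    (hU : Differentiable ℝ U)
    (hinv : ∀ R : Matrix (Fin 3) (Fin 3) ℝ, Rᵀ * R = 1 → R.det = 1 →
      ∀ q : Fin N → Fin 3 → ℝ, U (fun i => R.mulVec (q i)) = U q)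
    (q : Fin N → Fin 3 → ℝ)
    (R : ℝ → Matrix (Fin 3) (Fin 3) ℝ) (Ω : Matrix (Fin 3) (Fin 3) ℝ)
    (hR0 : R 0 = 1)
    (hso : ∀ t, (R t)ᵀ * R t = 1) (hdet : ∀ t, (R t).det = 1)
    (hder : ∀ j k, HasDerivAt (fun t => R t j k) (Ω j k) 0) :
    ∑ i : Fin N, ∑ j : Fin 3, (Ω.mulVec (q i)) j *
      fderiv ℝ U q (Pi.single i (Pi.single j (1:ℝ))) = 0 := by
  set v : Fin N → Fin 3 → ℝ := fun i => Ω.mulVec (q i) with hv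
  set f : ℝ → (Fin N → Fin 3 → ℝ) := fun t i => (R t).mulVec (q i) with hf
  have h1 : HasDerivAt f v 0 := by
    rw [hasDerivAt_pi]
    intro i
    rw [hasDerivAt_pi]
    intro j
    simp only [hf, hv, Matrix.mulVec, dotProduct]
    exact HasDerivAt.fun_sum fun k _ => (hder j k).mul_const _
  have hf0 : f 0 = q := by
    funext i; simp [hf, hR0, Matrix.one_mulVec]
  have h2 : HasDerivAt (fun t => U (f t)) (fderiv ℝ U q v) 0 := by
    have := ((hU (f 0)).hasFDerivAt).comp_hasDerivAt 0 h1
    rwa [hf0] at this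
  have hconst : (fun t => U (f t)) = fun _ => U q :=
    funext fun t => hinv (R t) (hso t) (hdet t) q
  rw [hconst] at h2
  have h3 : fderiv ℝ U q v = 0 := h2.unique (hasDerivAt_const 0 (U q))
  have hvdecomp : v = ∑ i : Fin N, ∑ j : Fin 3,
      v i j • (Pi.single i (Pi.single j (1:ℝ)) : Fin N → Fin 3 → ℝ) := by
    funext i' j'
    simp [Finset.sum_apply, ite_apply, Pi.single_apply, Pi.smul_apply, smul_eq_mul,
      Finset.sum_ite_eq', mul_ite, mul_one, mul_zero]
  calc ∑ i : Fin N, ∑ j : Fin 3,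
        v i j * fderiv ℝ U q (Pi.single i (Pi.single j (1:ℝ)))
      = fderiv ℝ U q v := by
        conv_rhs => rw [hvdecomp]
        simp [map_sum, _root_.map_smul, smul_eq_mul]
    _ = 0 := h3

theorem stmt0 (N : ℕ) (U : (Fin N → Fin 3 → ℝ) → ℝ)
    (hU : Differentiable ℝ U)
    (hinv : ∀ R : Matrix (Fin 3) (Fin 3) ℝ, Rᵀ * R = 1 → R.det = 1 →
      ∀ q : Fin N → Fin 3 → ℝ, U (fun i => R.mulVec (q i)) = U q)
    (q : Fin N → Fin 3 → ℝ) :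
    ∑ i : Fin N, crossProduct (q i)
      (fun j => fderiv ℝ U q (Pi.single i (Pi.single j (1:ℝ)))) = 0 := by
  have hx := key_lemma N U hU hinv q
    (fun t => !![1,0,0; 0, Real.cos t, -Real.sin t; 0, Real.sin t, Real.cos t])
    !![0,0,0; 0,0,-1; 0,1,0]
    (by ext i j; fin_cases i <;> fin_cases j <;>
        simp [Matrix.vecHead, Matrix.vecTail, Matrix.one_apply])
    (by
      intro t
      ext i j
      fin_cases i <;> fin_cases j <;>
        simp [Matrix.mul_apply, Fin.sum_univ_three, Matrix.transpose_apply,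
          Matrix.vecHead, Matrix.vecTail, Matrix.one_apply] <;>
        nlinarith [Real.sin_sq_add_cos_sq t])
    (by
      intro t
      simp [Matrix.det_fin_three, Matrix.vecHead, Matrix.vecTail]
      nlinarith [Real.sin_sq_add_cos_sq t])
    (by
      intro j k
      fin_cases j <;> fin_cases k <;>
      simp [Matrix.vecHead, Matrix.vecTail] <;>
      first
        | exact hasDerivAt_const 0 _
        | simpa using (Real.hasDerivAt_cos 0)
        | simpa using (Real.hasDerivAt_sin 0)
        | simpa using (Real.hasDerivAt_sin 0).fun_neg)
  have hy := key_lemma N U hU hinv q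
    (fun t => !![Real.cos t, 0, Real.sin t; 0, 1, 0; -Real.sin t, 0, Real.cos t])
    !![0,0,1; 0,0,0; -1,0,0]
    (by ext i j; fin_cases i <;> fin_cases j <;>
        simp [Matrix.vecHead, Matrix.vecTail, Matrix.one_apply])
    (by
      intro t
      ext i j
      fin_cases i <;> fin_cases j <;>
        simp [Matrix.mul_apply, Fin.sum_univ_three, Matrix.transpose_apply,
          Matrix.vecHead, Matrix.vecTail, Matrix.one_apply] <;>
        nlinarith [Real.sin_sq_add_cos_sq t])
    (by
      intro t
      simp [Matrix.det_fin_three, Matrix.vecHead, Matrix.vecTail]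
      nlinarith [Real.sin_sq_add_cos_sq t])
    (by
      intro j k
      fin_cases j <;> fin_cases k <;>
      simp [Matrix.vecHead, Matrix.vecTail] <;>
      first
        | exact hasDerivAt_const 0 _
        | simpa using (Real.hasDerivAt_cos 0)
        | simpa using (Real.hasDerivAt_sin 0)
        | simpa using (Real.hasDerivAt_sin 0).fun_neg)
  have hz := key_lemma N U hU hinv q
    (fun t => !![Real.cos t, -Real.sin t, 0; Real.sin t, Real.cos t, 0; 0, 0, 1])
    !![0,-1,0; 1,0,0; 0,0,0]
    (by ext i j; fin_cases i <;> fin_cases j <;>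
        simp [Matrix.vecHead, Matrix.vecTail, Matrix.one_apply])
    (by
      intro t
      ext i j
      fin_cases i <;> fin_cases j <;>
        simp [Matrix.mul_apply, Fin.sum_univ_three, Matrix.transpose_apply,
          Matrix.vecHead, Matrix.vecTail, Matrix.one_apply] <;>
        nlinarith [Real.sin_sq_add_cos_sq t])
    (by
      intro t
      simp [Matrix.det_fin_three, Matrix.vecHead, Matrix.vecTail]
      nlinarith [Real.sin_sq_add_cos_sq t])
    (by
      intro j k
      fin_cases j <;> fin_cases k <;>
      simp [Matrix.vecHead, Matrix.vecTail] <;>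
      first
        | exact hasDerivAt_const 0 _
        | simpa using (Real.hasDerivAt_cos 0)
        | simpa using (Real.hasDerivAt_sin 0)
        | simpa using (Real.hasDerivAt_sin 0).fun_neg)
  funext k
  simp only [Finset.sum_apply, Pi.zero_apply]
  fin_cases k
  · calc ∑ i : Fin N, (crossProduct (q i))
          (fun j => fderiv ℝ U q (Pi.single i (Pi.single j (1:ℝ)))) 0
        = ∑ i : Fin N, ∑ j : Fin 3, ((!![0,0,0; 0,0,-1; 0,1,0] : Matrix (Fin 3) (Fin 3) ℝ).mulVec (q i)) j *
            fderiv ℝ U q (Pi.single i (Pi.single j (1:ℝ))) := by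
          refine Finset.sum_congr rfl fun i _ => ?_
          simp [cross_apply, Fin.sum_univ_three, Matrix.mulVec, dotProduct,
            Matrix.vecHead, Matrix.vecTail]
          ring
      _ = 0 := hx
  · calc ∑ i : Fin N, (crossProduct (q i))
          (fun j => fderiv ℝ U q (Pi.single i (Pi.single j (1:ℝ)))) 1
        = ∑ i : Fin N, ∑ j : Fin 3, ((!![0,0,1; 0,0,0; -1,0,0] : Matrix (Fin 3) (Fin 3) ℝ).mulVec (q i)) j *
            fderiv ℝ U q (Pi.single i (Pi.single j (1:ℝ))) := by
          refine Finset.sum_congr rfl fun i _ => ?_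
          simp [cross_apply, Fin.sum_univ_three, Matrix.mulVec, dotProduct,
            Matrix.vecHead, Matrix.vecTail]
          ring
      _ = 0 := hy
  · calc ∑ i : Fin N, (crossProduct (q i))
          (fun j => fderiv ℝ U q (Pi.single i (Pi.single j (1:ℝ)))) 2
        = ∑ i : Fin N, ∑ j : Fin 3, ((!![0,-1,0; 1,0,0; 0,0,0] : Matrix (Fin 3) (Fin 3) ℝ).mulVec (q i)) j *
            fderiv ℝ U q (Pi.single i (Pi.single j (1:ℝ))) := by
          refine Finset.sum_congr rfl fun i _ => ?_
          simp [cross_apply, Fin.sum_univ_three, Matrix.mulVec, dotProduct,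
            Matrix.vecHead, Matrix.vecTail]
          ring
      _ = 0 := hz
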